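/- Let P be a profile of strict partial orders on a finite candidate set C that is possibly single-peaked with respect to some axis A. Then the corresponding 2-SAT-style constraint system is satisfiable: setting variable ab to true iff a ⊳ b on A satisfies, for every vote V and all distinct a,b,c with a ≻ b and c ≻ b in V, the clauses (ba ∨ cb) and (ab ∨ bc), and for every distinct pair a,b the constraints (ab ∨ ba) and (¬ab ∨ ¬ba). -/

import Mathlib

def VValley {C : Type*} (A V : C → C → Prop) : Prop :=
  ∃ c1 c2 c3 : C, A c1 c2 ∧ A c2 c3 ∧ V c1 c2 ∧ V c3 c2

def UValley {C : Type*} (A V : C → C → Prop) : Prop :=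
  ∃ a b c d : C, a ≠ b ∧ a ≠ c ∧ a ≠ d ∧ b ≠ c ∧ b ≠ d ∧ c ≠ d ∧
    A a b ∧ A b d ∧ A a c ∧ A c d ∧ V a b ∧ V d c

def Extends {C : Type*} (V T : C → C → Prop) : Prop :=
  ∀ x y, V x y → T x y

/-- `V` is a strict partial order: asymmetric and transitive. -/
def IsSPO {C : Type*} (V : C → C → Prop) : Prop :=
  (∀ x y, V x y → ¬ V y x) ∧ (∀ x y z, V x y → V y z → V x z)

/-- `V` is a strict weak order: a strict partial order with transitive incomparability. -/
def IsSWO {C : Type*} (V : C → C → Prop) : Prop :=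
  IsSPO V ∧ ∀ x y z, (¬ V x y ∧ ¬ V y x) → (¬ V y z ∧ ¬ V z y) → (¬ V x z ∧ ¬ V z x)

/-- `V` possibly single-peaked w.r.t. axis `A`: it extends to a total order with no v-valley. -/
def PossSP {C : Type*} (A V : C → C → Prop) : Prop :=
  ∃ T : C → C → Prop, IsStrictTotalOrder C T ∧ Extends V T ∧ ¬ VValley A T

theorem stmt18 {C : Type*} [Fintype C] (A : C → C → Prop) (hA : IsStrictTotalOrder C A)
    (n : ℕ) (V : Fin n → C → C → Prop)
    (hV : ∀ i, IsSPO (V i))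
    (hposs : ∀ i, PossSP A (V i)) :
    (∀ i, ∀ a b c : C, a ≠ b → a ≠ c → b ≠ c → V i a b → V i c b →
      (A b a ∨ A c b) ∧ (A a b ∨ A b c)) ∧
    (∀ a b : C, a ≠ b → (A a b ∨ A b a) ∧ ¬ (A a b ∧ A b a)) := by
  constructor
  · intro i a b c hab hac hbc hVab hVcb
    obtain ⟨T, hT, hext, hnv⟩ := hposs i
    have hTab : T a b := hext _ _ hVab
    have hTcb : T c b := hext _ _ hVcb
    constructor
    · rcases (show A a b ∨ a = b ∨ A b a by by_cases h1 : A a b; exact Or.inl h1; by_cases h2 : A b a; exact Or.inr (Or.inr h2); exact Or.inr (Or.inl (hA.trichotomous a b h1 h2))) with h | h | h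
      · right
        rcases (show A c b ∨ c = b ∨ A b c by by_cases h1 : A c b; exact Or.inl h1; by_cases h2 : A b c; exact Or.inr (Or.inr h2); exact Or.inr (Or.inl (hA.trichotomous c b h1 h2))) with h2 | h2 | h2
        · exact h2
        · exact absurd h2 hbc.symm
        · exact absurd ⟨a, b, c, h, h2, hTab, hTcb⟩ hnv
      · exact absurd h hab
      · exact Or.inl h
    · rcases (show A b c ∨ b = c ∨ A c b by by_cases h1 : A b c; exact Or.inl h1; by_cases h2 : A c b; exact Or.inr (Or.inr h2); exact Or.inr (Or.inl (hA.trichotomous b c h1 h2))) with h | h | h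
      · exact Or.inr h
      · exact absurd h hbc
      · left
        rcases (show A a b ∨ a = b ∨ A b a by by_cases h1 : A a b; exact Or.inl h1; by_cases h2 : A b a; exact Or.inr (Or.inr h2); exact Or.inr (Or.inl (hA.trichotomous a b h1 h2))) with h2 | h2 | h2
        · exact h2
        · exact absurd h2 hab
        · exact absurd ⟨c, b, a, h, h2, hTcb, hTab⟩ hnv
  · intro a b hab
    refine ⟨?_, ?_⟩
    · rcases (show A a b ∨ a = b ∨ A b a by by_cases h1 : A a b; exact Or.inl h1; by_cases h2 : A b a; exact Or.inr (Or.inr h2); exact Or.inr (Or.inl (hA.trichotomous a b h1 h2))) with h | h | h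
      · exact Or.inl h
      · exact absurd h hab
      · exact Or.inr h
    · rintro ⟨h1, h2⟩
      exact hA.irrefl a (hA.trans _ _ _ h1 h2)
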